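/- Let x_1, ..., x_m be complex numbers and suppose that for every positive integer n, the power sum x_1^n + ... + x_m^n is a real number. Then the multiset {x_1, ..., x_m} is closed under complex conjugation. -/

import Mathlib

theorem stmt18 (m : ℕ) (x : Fin m → ℂ)
    (h : ∀ n : ℕ, 1 ≤ n → ∃ r : ℝ, ∑ i, x i ^ n = (r : ℂ)) :
    (Finset.univ.val.map x).map (starRingEnd ℂ) = Finset.univ.val.map x := by
  set s : Multiset ℂ := Finset.univ.val.map x with hs
  -- power sums are fixed by conjugation
  have hp : ∀ n : ℕ, 1 ≤ n →
      (starRingEnd ℂ) (MvPolynomial.aeval x (MvPolynomial.psum (Fin m) ℂ n))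
        = MvPolynomial.aeval x (MvPolynomial.psum (Fin m) ℂ n) := by
    intro n hn
    obtain ⟨r, hr⟩ := h n hn
    have : MvPolynomial.aeval x (MvPolynomial.psum (Fin m) ℂ n) = (r : ℂ) := by
      simp [MvPolynomial.psum, map_sum, hr]
    rw [this, Complex.conj_ofReal]
  -- elementary symmetric functions are fixed by conjugation (Newton's identities)
  have he : ∀ k : ℕ, (starRingEnd ℂ) (s.esymm k) = s.esymm k := by
    intro k
    induction k using Nat.strong_induction_on with
    | _ k ih =>
      rcases Nat.eq_zero_or_pos k with rfl | hk
      · simp [Multiset.esymm]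
      · have key : (k : ℂ) * s.esymm k = (-1) ^ (k + 1) *
            ∑ a ∈ Finset.HasAntidiagonal.antidiagonal k with a.1 < k,
              (-1) ^ a.1 * s.esymm a.1 *
                MvPolynomial.aeval x (MvPolynomial.psum (Fin m) ℂ a.2) := by
          have := congrArg (MvPolynomial.aeval x)
            (MvPolynomial.mul_esymm_eq_sum (Fin m) ℂ k)
          simpa [map_mul, map_sum, map_pow, map_natCast,
            MvPolynomial.aeval_esymm_eq_multiset_esymm, hs] using this
        have hconj : (starRingEnd ℂ) ((k : ℂ) * s.esymm k) = (k : ℂ) * s.esymm k := by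
          rw [key, map_mul, map_pow, map_neg, map_one]
          congr 1
          rw [map_sum]
          refine Finset.sum_congr rfl ?_
          intro a ha
          simp only [Finset.mem_filter, Finset.mem_antidiagonal] at ha
          rw [map_mul, map_mul, map_pow, map_neg, map_one, ih a.1 ha.2,
            hp a.2 (by have := Finset.HasAntidiagonal.mem_antidiagonal.mp ha.1; omega)]
        rw [map_mul, map_natCast] at hconj
        exact mul_left_cancel₀ (Nat.cast_ne_zero.mpr hk.ne' : (k : ℂ) ≠ 0) hconj
  -- the polynomial ∏ (X - xᵢ) is fixed by conjugation
  have hP : ((s.map fun a => Polynomial.X - Polynomial.C a).prod).map (starRingEnd ℂ) =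
      (s.map fun a => Polynomial.X - Polynomial.C a).prod := by
    ext k
    rw [Polynomial.coeff_map]
    rcases le_or_gt k (Multiset.card s) with hk | hk
    · rw [Multiset.prod_X_sub_C_coeff s hk, map_mul, map_pow, map_neg, map_one, he]
    · rw [Polynomial.coeff_eq_zero_of_natDegree_lt
        (by rwa [Polynomial.natDegree_multiset_prod_X_sub_C_eq_card])]
      simp
  have h2 : ((s.map fun a => Polynomial.X - Polynomial.C a).prod).map (starRingEnd ℂ)
      = ((s.map (starRingEnd ℂ)).map fun a => Polynomial.X - Polynomial.C a).prod := by
    rw [Polynomial.map_multiset_prod]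
    congr 1
    simp only [hs, Multiset.map_map]
    apply Multiset.map_congr rfl
    intro a _
    simp [Function.comp]
  have h3 := congrArg Polynomial.roots (h2.symm.trans hP)
  rwa [Polynomial.roots_multiset_prod_X_sub_C, Polynomial.roots_multiset_prod_X_sub_C] at h3
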